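/- Let E be a finite-dimensional real normed vector space, let X : ℝ × E → E and Φ : ℝ × E → E be of class C¹ jointly in both variables, let s ∈ ℝ, and suppose Φ(s, x) = x for all x ∈ E and that for every t ∈ ℝ and x ∈ E the map τ ↦ Φ(τ, x) has derivative X(t, Φ(t, x)) at τ = t (Φ is the evolution operator of the time-dependent vector field X with initial time s). Then for every t ∈ ℝ and all x, v ∈ E, the map τ ↦ (fderiv ℝ (fun y => Φ(τ, y)) x)(v) has derivative (fderiv ℝ (fun y => X(t, y)) (Φ(t, x)))((fderiv ℝ (fun y => Φ(t, y)) x)(v)) at τ = t. That is, the pair (Φ(t,x), D_xΦ(t,·)|_x v) is an integral curve of the complete (tangent) lift of X, so the evolution operator of the complete lift Xᵀ is the tangent map of the evolution operator of X. -/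

import Mathlib

open intervalIntegral MeasureTheory Metric

section helpers

variable {E : Type*} [NormedAddCommGroup E] [NormedSpace ℝ E]
  {F : Type*} [NormedAddCommGroup F] [NormedSpace ℝ F]

theorem hasFDerivAt_partial_aux (f : ℝ × E → F) (hf : ContDiff ℝ 1 f) (t : ℝ) (z : E) :
    HasFDerivAt (fun y => f (t, y))
      ((fderiv ℝ f (t, z)).comp (ContinuousLinearMap.inr ℝ ℝ E)) z :=
  (hf.differentiable one_ne_zero (t, z)).hasFDerivAt.comp z (hasFDerivAt_prodMk_right t z)

theorem fderiv_partial_eq (f : ℝ × E → F) (hf : ContDiff ℝ 1 f) (t : ℝ) (z : E) :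
    fderiv ℝ (fun y => f (t, y)) z
      = (fderiv ℝ f (t, z)).comp (ContinuousLinearMap.inr ℝ ℝ E) :=
  (hasFDerivAt_partial_aux f hf t z).fderiv

theorem hasFDerivAt_partial (f : ℝ × E → F) (hf : ContDiff ℝ 1 f) (t : ℝ) (z : E) :
    HasFDerivAt (fun y => f (t, y)) (fderiv ℝ (fun y => f (t, y)) z) z := by
  rw [fderiv_partial_eq f hf t z]; exact hasFDerivAt_partial_aux f hf t z

theorem continuous_fderiv_partial (f : ℝ × E → F) (hf : ContDiff ℝ 1 f) :
    Continuous (fun p : ℝ × E => fderiv ℝ (fun y => f (p.1, y)) p.2) := by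
  have : (fun p : ℝ × E => fderiv ℝ (fun y => f (p.1, y)) p.2)
      = fun p : ℝ × E => (fderiv ℝ f p).comp (ContinuousLinearMap.inr ℝ ℝ E) := by
    funext p; exact fderiv_partial_eq f hf p.1 p.2
  rw [this]
  exact (hf.continuous_fderiv one_ne_zero).clm_comp continuous_const

end helpers

theorem evolution_operator_of_complete_lift_is_tangent_map
    {E : Type*} [NormedAddCommGroup E] [NormedSpace ℝ E] [FiniteDimensional ℝ E]
    (X Φ : ℝ × E → E)
    (hX : ContDiff ℝ 1 X) (hΦ : ContDiff ℝ 1 Φ)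
    (s : ℝ) (hs : ∀ x : E, Φ (s, x) = x)
    (hflow : ∀ (t : ℝ) (x : E), HasDerivAt (fun τ : ℝ => Φ (τ, x)) (X (t, Φ (t, x))) t) :
    ∀ (t : ℝ) (x v : E),
      HasDerivAt (fun τ : ℝ => fderiv ℝ (fun y => Φ (τ, y)) x v)
        (fderiv ℝ (fun y => X (t, y)) (Φ (t, x)) (fderiv ℝ (fun y => Φ (t, y)) x v)) t := by
  intro t x v
  -- notation
  set A : ℝ → E → (E →L[ℝ] E) := fun τ z => fderiv ℝ (fun y => X (τ, y)) (Φ (τ, z)) with hA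
  set B : ℝ → E → (E →L[ℝ] E) := fun τ z => fderiv ℝ (fun y => Φ (τ, y)) z with hB
  set C : ℝ → E → (E →L[ℝ] E) := fun τ z => (A τ z).comp (B τ z) with hC
  have hΦc : Continuous Φ := hΦ.continuous
  have hXc : Continuous X := hX.continuous
  -- continuity of A, B, C jointly
  have hBcont : Continuous fun p : ℝ × E => B p.1 p.2 := continuous_fderiv_partial Φ hΦ
  have hAcont : Continuous fun p : ℝ × E => A p.1 p.2 := by
    have := (continuous_fderiv_partial X hX).comp
      (continuous_fst.prodMk (hΦc : Continuous fun p : ℝ × E => Φ p))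
    exact this
  have hCcont : Continuous fun p : ℝ × E => C p.1 p.2 := hAcont.clm_comp hBcont
  -- chain rule: derivative of z ↦ X (τ, Φ (τ, z))
  have hchain : ∀ (τ : ℝ) (z : E),
      HasFDerivAt (fun w => X (τ, Φ (τ, w))) (C τ z) z := fun τ z => by
    have h := (hasFDerivAt_partial X hX τ (Φ (τ, z))).comp z (hasFDerivAt_partial Φ hΦ τ z); exact h
  -- integral equation: Φ (t, z) = z + ∫ τ in s..t, X (τ, Φ (τ, z))
  have hcontz : ∀ z : E, Continuous fun τ => X (τ, Φ (τ, z)) := fun z =>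
    hXc.comp (continuous_id.prodMk (hΦc.comp (continuous_id.prodMk continuous_const)))
  have hinteq : ∀ (t' : ℝ) (z : E), Φ (t', z) = z + ∫ τ in s..t', X (τ, Φ (τ, z)) := by
    intro t' z
    have := integral_eq_sub_of_hasDerivAt (f := fun τ => Φ (τ, z))
      (f' := fun τ => X (τ, Φ (τ, z))) (fun τ _ => hflow τ z)
      ((hcontz z).intervalIntegrable s t')
    rw [this]
    show Φ (t', z) = z + (Φ (t', z) - Φ (s, z))
    rw [hs z]; abel
  -- differentiate under the integral sign at x, for each fixed time t'
  have key : ∀ t' : ℝ, HasFDerivAt (fun z => Φ (t', z))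
      ((ContinuousLinearMap.id ℝ E) + ∫ τ in s..t', C τ x) x := by
    intro t'
    -- bound on the compact set uIcc s t' × closedBall x 1
    obtain ⟨M, hM⟩ : ∃ M, ∀ p ∈ (Set.uIcc s t') ×ˢ closedBall x 1, ‖C p.1 p.2‖ ≤ M :=
      (isCompact_uIcc.prod (isCompact_closedBall x 1)).exists_bound_of_continuousOn
        hCcont.continuousOn
    have hint : HasFDerivAt (fun z => ∫ τ in s..t', X (τ, Φ (τ, z)))
        (∫ τ in s..t', C τ x) x := by
      apply intervalIntegral.hasFDerivAt_integral_of_dominated_of_fderiv_le (F' := fun z τ => C τ z)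
        (bound := fun _ => M) (ball_mem_nhds x one_pos)
      · filter_upwards with z using ((hcontz z).aestronglyMeasurable).restrict
      · exact (hcontz x).intervalIntegrable s t'
      · exact (Continuous.aestronglyMeasurable (by
          exact hCcont.comp (continuous_id.prodMk continuous_const))).restrict
      · filter_upwards with τ hτ z hz
        exact hM (τ, z) ⟨Set.uIoc_subset_uIcc hτ, ball_subset_closedBall hz⟩
      · exact intervalIntegrable_const
      · filter_upwards with τ hτ z hz using hchain τ z
    have : (fun z => Φ (t', z)) = fun z => z + ∫ τ in s..t', X (τ, Φ (τ, z)) := by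
      funext z; exact hinteq t' z
    rw [this]
    exact (hasFDerivAt_id x).add hint
  -- hence B t' x v = v + ∫ τ in s..t', C τ x v
  have hCint : ∀ t' : ℝ, IntervalIntegrable (fun τ => C τ x) volume s t' := fun t' =>
    Continuous.intervalIntegrable (hCcont.comp (continuous_id.prodMk continuous_const)) s t'
  have hBval : ∀ t' : ℝ, B t' x v = v + ∫ τ in s..t', C τ x v := by
    intro t'
    have h1 : B t' x = (ContinuousLinearMap.id ℝ E) + ∫ τ in s..t', C τ x := (key t').fderiv
    rw [h1]
    simp only [ContinuousLinearMap.add_apply, ContinuousLinearMap.id_apply]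
    rw [ContinuousLinearMap.intervalIntegral_apply (hCint t') v]
  -- finally, differentiate in t
  have hgc : Continuous fun τ => C τ x v :=
    ((hCcont.comp (continuous_id.prodMk continuous_const)).clm_apply continuous_const)
  have hder : HasDerivAt (fun t' => v + ∫ τ in s..t', C τ x v) (C t x v) t := by
    refine HasDerivAt.const_add v ?_
    exact integral_hasDerivAt_right ((hgc.intervalIntegrable s t))
      (hgc.stronglyMeasurableAtFilter _ _) hgc.continuousAt
  have : (fun τ : ℝ => fderiv ℝ (fun y => Φ (τ, y)) x v)
      = fun t' => v + ∫ τ in s..t', C τ x v := by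
    funext t'; exact hBval t'
  rw [this]
  exact hder
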